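/- Let 1 < p, q < ∞ with 1/p + 1/q = 1, let μ be a finite Borel measure on a measurable space Ω, let each φₙ : Ω → ℝ be measurable, and suppose C := sup_{x∈Ω} ∑ₙ |φₙ(x)|^q < ∞. Then for every a ∈ ℓp the function f_a is defined at every point of Ω, is measurable, belongs to L_q(μ), and satisfies ‖f_a‖_{L_q(μ)} ≤ (C · μ(Ω))^{1/q} · ‖a‖_{ℓp}. (The p-norm space B_K^p(Ω) is imbedded into L_q(Ω) by the identity map.) -/

import Mathlib

open MeasureTheory

/-- **Imbedding of the p-norm space `B_K^p(Ω)` into `L_q(Ω)` by the identity map.**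
Let `1 < p, q < ∞` with `1/p + 1/q = 1`, let `μ` be a finite Borel measure on `Ω`,
let each `φₙ` be measurable, and suppose `C := sup_x ∑ₙ |φₙ x|^q < ∞`. Then for
every `a ∈ ℓp` the function `f_a(x) = ∑ₙ aₙ φₙ(x)` is defined at every point,
measurable, belongs to `L_q(μ)`, and
`‖f_a‖_{L_q(μ)} ≤ (C · μ(Ω))^{1/q} ‖a‖_{ℓp}`. -/
theorem stmt3 {Ω : Type*} [MeasurableSpace Ω] (μ : Measure Ω) [IsFiniteMeasure μ]
    (p q : ℝ) (hp : 1 < p) (hq : 1 < q) (hpq : 1 / p + 1 / q = 1)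
    (φ : ℕ → Ω → ℝ) (hmeas : ∀ n, Measurable (φ n))
    (C : ℝ)
    (hsum : ∀ x : Ω, Summable fun n => |φ n x| ^ q)
    (hC : ∀ x : Ω, ∑' n, |φ n x| ^ q ≤ C) :
    ∀ a : ℕ → ℝ, (Summable fun n => |a n| ^ p) →
      (∀ x : Ω, Summable fun n => |a n * φ n x|) ∧
      Measurable (fun x => ∑' n, a n * φ n x) ∧
      MemLp (fun x => ∑' n, a n * φ n x) (ENNReal.ofReal q) μ ∧
      eLpNorm (fun x => ∑' n, a n * φ n x) (ENNReal.ofReal q) μ ≤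
        ENNReal.ofReal
          ((C * (μ Set.univ).toReal) ^ (1 / q) * (∑' n, |a n| ^ p) ^ (1 / p)) := by
  intro a ha
  have hpq' : p.HolderConjugate q := ⟨by simpa [one_div] using hpq, by linarith, by linarith⟩
  -- summability of |a n * φ n x|
  have hs : ∀ x : Ω, Summable fun n => |a n * φ n x| := by
    intro x
    simp only [abs_mul]
    exact Real.summable_mul_of_Lp_Lq_of_nonneg hpq' (fun n => abs_nonneg _) (fun n => abs_nonneg _)
      ha (hsum x)
  -- measurability
  have hmeasf : Measurable (fun x => ∑' n, a n * φ n x) := by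
    refine measurable_of_tendsto_metrizable'
      (f := fun N x => ∑ n ∈ Finset.range N, a n * φ n x) Filter.atTop
      (fun N => Finset.measurable_sum _ fun n _ => (hmeas n).const_mul (a n)) ?_
    rw [tendsto_pi_nhds]
    intro x
    exact ((hs x).of_abs.hasSum).tendsto_sum_nat
  refine ⟨hs, hmeasf, ?_⟩
  rcases isEmpty_or_nonempty Ω with hΩ | hΩ
  · have hμ : μ = 0 := by
      ext s hsm
      exact MeasureTheory.Measure.apply_eq_zero_of_isEmpty μ s
    subst hμ
    refine ⟨⟨hmeasf.aestronglyMeasurable, by simp⟩, by simp⟩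
  have hC0 : 0 ≤ C :=
    le_trans (tsum_nonneg fun n => by positivity) (hC (Classical.arbitrary Ω))
  set A : ℝ := (∑' n, |a n| ^ p) ^ (1 / p) with hA
  have hA0 : 0 ≤ A := Real.rpow_nonneg (tsum_nonneg fun n => by positivity) _
  -- pointwise bound
  have hbound : ∀ x : Ω, ‖∑' n, a n * φ n x‖ ≤ C ^ (1 / q) * A := by
    intro x
    rw [Real.norm_eq_abs]
    calc |∑' n, a n * φ n x| ≤ ∑' n, |a n * φ n x| := by
          simpa only [Real.norm_eq_abs] using norm_tsum_le_tsum_norm (f := fun n => a n * φ n x)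
            (by simpa only [Real.norm_eq_abs] using hs x)
      _ = ∑' n, |a n| * |φ n x| := by simp only [abs_mul]
      _ ≤ (∑' n, |a n| ^ p) ^ (1 / p) * (∑' n, |φ n x| ^ q) ^ (1 / q) :=
          Real.inner_le_Lp_mul_Lq_tsum_of_nonneg hpq' (fun n => abs_nonneg _)
            (fun n => abs_nonneg _) ha (hsum x)
      _ = (∑' n, |φ n x| ^ q) ^ (1 / q) * A := by rw [mul_comm]
      _ ≤ C ^ (1 / q) * A := by
          refine mul_le_mul_of_nonneg_right ?_ hA0
          exact Real.rpow_le_rpow (tsum_nonneg fun n => by positivity) (hC x) (by positivity)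
  have hq0 : (0:ℝ) ≤ q := le_of_lt (lt_trans one_pos hq)
  have hmem : MemLp (fun x => ∑' n, a n * φ n x) (ENNReal.ofReal q) μ :=
    MemLp.of_bound hmeasf.aestronglyMeasurable _ (Filter.Eventually.of_forall hbound)
  refine ⟨hmem, ?_⟩
  have h1 := eLpNorm_le_of_ae_bound (μ := μ) (p := ENNReal.ofReal q)
    (Filter.Eventually.of_forall hbound)
  refine h1.trans ?_
  have htoReal : (ENNReal.ofReal q).toReal = q := ENNReal.toReal_ofReal hq0
  rw [htoReal]
  set m : ℝ := (μ Set.univ).toReal with hm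
  have hm0 : 0 ≤ m := ENNReal.toReal_nonneg
  have hμu : μ Set.univ = ENNReal.ofReal m := by
    rw [hm, ENNReal.ofReal_toReal (measure_ne_top μ _)]
  rw [hμu, ENNReal.ofReal_rpow_of_nonneg hm0 (by positivity),
    ← ENNReal.ofReal_mul (by positivity)]
  apply ENNReal.ofReal_le_ofReal
  rw [Real.mul_rpow hC0 hm0]
  simp only [one_div]
  exact le_of_eq (by ring)
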